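/- arXiv:1508.06440 — 3 statements merged into one kernel-verified Lean document; each statement's English description precedes it below -/
import Mathlib

section
/- Let ρ ∈ (0,1). Let r be a real random variable with probability density function f_r(y) = ((1−ρ²)/(2ρ)) (2−y)^{−2} for y ∈ (1−ρ, 1+ρ) and f_r(y) = 0 otherwise, and let E be an exponential random variable with rate 1 independent of r. Then the product X = r·E has probability density function f_g(x) = ((1−ρ²)/(2ρ)) [F(1+ρ, x) − F(1−ρ, x)] for x > 0, where F(η,x) = η/(4(2−η)) · e^{−x/η} − ((2−x)/8) · e^{−x/2} · Ei(x(1/2 − 1/η)). -/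
open MeasureTheory ProbabilityTheory Set
open scoped ENNReal

noncomputable section

/-- Exponential integral; for a negative argument `z = -u` with `u > 0`,
`Ei z = -∫_u^∞ e^{-t}/t dt`. -/
def Ei (z : ℝ) : ℝ := -∫ t in Set.Ioi (-z), Real.exp (-t) / t

/-- The function `F(η, x)` from Theorem 1 of the paper. -/
def Ffun (η x : ℝ) : ℝ :=
  η / (4 * (2 - η)) * Real.exp (-x / η)
    - (2 - x) / 8 * Real.exp (-x / 2) * Ei (x * (1 / 2 - 1 / η))

/-- Law of an exponential random variable with rate 1: density `e^{-x}` on `(0,∞)`. -/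
def expMeasure : Measure ℝ :=
  volume.withDensity (Set.indicator (Set.Ioi 0) fun x => ENNReal.ofReal (Real.exp (-x)))

lemma integrableOn_expdiv {a : ℝ} (ha : 0 < a) :
    IntegrableOn (fun t => Real.exp (-t) / t) (Set.Ioi a) := by
  have h1 : IntegrableOn (fun t => Real.exp (-(1:ℝ) * t) * a⁻¹) (Set.Ioi a) :=
    (exp_neg_integrableOn_Ioi a one_pos).mul_const _
  refine h1.mono' ?_ ?_
  · exact (Real.measurable_exp.comp measurable_neg).div measurable_id |>.aestronglyMeasurable
  · filter_upwards [ae_restrict_mem measurableSet_Ioi] with t ht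
    have ht0 : 0 < t := ha.trans ht
    rw [Real.norm_eq_abs, abs_div, abs_of_pos (Real.exp_pos _), abs_of_pos ht0]
    rw [neg_one_mul, div_eq_mul_inv]
    have hat : a < t := ht
    gcongr

lemma hasDerivAt_H {u : ℝ} (hu : 0 < u) :
    HasDerivAt (fun v => ∫ t in Set.Ioi v, Real.exp (-t) / t) (-(Real.exp (-u) / u)) u := by
  set c := u / 2 with hc
  have hc0 : 0 < c := by positivity
  have key : ∀ v ∈ Set.Ioi (0:ℝ), (∫ t in Set.Ioi v, Real.exp (-t) / t)
      = (∫ t in Set.Ioi c, Real.exp (-t) / t) - ∫ t in c..v, Real.exp (-t) / t := by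
    intro v hv
    simp only [Set.mem_Ioi] at hv
    rcases le_total c v with h | h
    · rw [intervalIntegral.integral_of_le h, eq_sub_iff_add_eq, add_comm,
        ← setIntegral_union (Set.Ioc_disjoint_Ioi le_rfl) measurableSet_Ioi
          ((integrableOn_expdiv hc0).mono_set Set.Ioc_subset_Ioi_self)
          ((integrableOn_expdiv hc0).mono_set (Set.Ioi_subset_Ioi h)),
        Set.Ioc_union_Ioi_eq_Ioi h]
    · rw [intervalIntegral.integral_of_ge h, sub_neg_eq_add, add_comm,
        ← setIntegral_union (Set.Ioc_disjoint_Ioi le_rfl) measurableSet_Ioi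
          ((integrableOn_expdiv hv).mono_set Set.Ioc_subset_Ioi_self)
          ((integrableOn_expdiv hv).mono_set (Set.Ioi_subset_Ioi h)),
        Set.Ioc_union_Ioi_eq_Ioi h]
  have hcont : ContinuousAt (fun t => Real.exp (-t) / t) u :=
    ((Real.continuous_exp.comp continuous_neg).continuousAt).div continuousAt_id hu.ne'
  have hint : IntervalIntegrable (fun t => Real.exp (-t) / t) volume c u := by
    apply ContinuousOn.intervalIntegrable
    intro t ht
    rw [Set.uIcc_of_le (by linarith : c ≤ u)] at ht
    exact (((Real.continuous_exp.comp continuous_neg).continuousAt).div continuousAt_id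
      (by nlinarith [ht.1] : t ≠ 0)).continuousWithinAt
  have hd : HasDerivAt (fun v => (∫ t in Set.Ioi c, Real.exp (-t) / t)
      - ∫ t in c..v, Real.exp (-t) / t) (-(Real.exp (-u) / u)) u := by
    exact (intervalIntegral.integral_hasDerivAt_right hint
      ⟨Set.univ, Filter.univ_mem,
        (((Real.measurable_exp.comp measurable_neg).div measurable_id).aestronglyMeasurable).restrict⟩
      hcont).const_sub _
  exact hd.congr_of_eventuallyEq <|
    Filter.eventuallyEq_of_mem (Ioi_mem_nhds hu) key

lemma hasDerivAt_Ei {z : ℝ} (hz : z < 0) : HasDerivAt Ei (Real.exp z / z) z := by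
  have h1 := (hasDerivAt_H (u := -z) (by linarith)).comp z (hasDerivAt_neg z)
  have h2 := h1.neg
  have : Ei = fun z => -(∫ t in Set.Ioi (-z), Real.exp (-t) / t) := rfl
  rw [this]
  convert h2 using 1
  · rfl
  · rfl
  · rfl
  field_simp

lemma hasDerivAt_Ffun {x η : ℝ} (hx : 0 < x) (hη : 0 < η) (hη2 : η < 2) :
    HasDerivAt (fun η => Ffun η x) (((2 - η)^2)⁻¹ * (η⁻¹ * Real.exp (-x / η))) η := by
  have hne : η ≠ 0 := hη.ne'
  have h2pos : (0:ℝ) < 2 - η := by linarith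
  have h2ne : (2:ℝ) - η ≠ 0 := h2pos.ne'
  have hdenne : (4:ℝ) * (2 - η) ≠ 0 := by positivity
  have hhalf : (1:ℝ)/2 - 1/η < 0 := by
    have : (1:ℝ)/2 < 1/η := by
      rw [div_lt_div_iff₀ (by norm_num) hη]; linarith
    linarith
  have hzneg : x * (1/2 - 1/η) < 0 := mul_neg_of_pos_of_neg hx hhalf
  -- quotient term
  have hA1 : HasDerivAt (fun η : ℝ => η / (4 * (2 - η)))
      ((1 * (4 * (2 - η)) - η * (4 * (0 - 1))) / (4 * (2 - η))^2) η :=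
    (hasDerivAt_id η).div (((hasDerivAt_const η (2:ℝ)).sub (hasDerivAt_id η)).const_mul 4) hdenne
  -- exp term
  have hexp : HasDerivAt (fun η : ℝ => Real.exp (-x / η))
      (Real.exp (-x / η) * (-x * -(η^2)⁻¹)) η := by
    have h0 : HasDerivAt (fun η : ℝ => -x / η) (-x * -(η^2)⁻¹) η := by
      simpa [div_eq_mul_inv] using (hasDerivAt_inv hne).const_mul (-x)
    exact h0.exp
  -- Ei composite
  have hz' : HasDerivAt (fun η : ℝ => x * (1/2 - 1/η)) (x * (0 - -(η^2)⁻¹)) η := by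
    have := ((hasDerivAt_const η ((1:ℝ)/2)).sub (hasDerivAt_inv hne)).const_mul x
    simpa [one_div] using this
  have hEicomp := (hasDerivAt_Ei hzneg).comp η hz'
  have hB : HasDerivAt (fun η : ℝ => (2 - x) / 8 * Real.exp (-x / 2) * Ei (x * (1/2 - 1/η)))
      ((2 - x) / 8 * Real.exp (-x / 2) *
        (Real.exp (x * (1/2 - 1/η)) / (x * (1/2 - 1/η)) * (x * (0 - -(η^2)⁻¹)))) η :=
    hEicomp.const_mul _
  have htot := (hA1.mul hexp).sub hB
  simp only [Ffun]
  convert htot using 1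
  · rfl
  · rfl
  · rfl
  have hzne : x * (1/2 - 1/η) ≠ 0 := hzneg.ne
  have hexpz : Real.exp (x * (1/2 - 1/η)) = Real.exp (-x / η) * (Real.exp (-x / 2))⁻¹ := by
    rw [← Real.exp_neg, ← Real.exp_add]
    congr 1
    field_simp
    ring
  have he2 : Real.exp (-x / 2) ≠ 0 := Real.exp_ne_zero _
  have hsub : (1:ℝ)/2 - 1/η ≠ 0 := hhalf.ne
  have hkey : Real.exp (x*(1/2-1/η)) / (x*(1/2-1/η)) * (x * (0 - -(η^2)⁻¹))
      = -(2 * (Real.exp (-x/η) * (Real.exp (-x/2))⁻¹)) / (η * (2 - η)) := by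
    rw [hexpz]
    rw [div_mul_eq_mul_div, div_eq_div_iff hzne (by positivity : η * (2 - η) ≠ 0)]
    field_simp
    ring
  rw [hkey]
  field_simp
  ring

lemma contOn_integrand {ρ x : ℝ} (hρ0 : 0 < ρ) (hρ1 : ρ < 1) :
    ContinuousOn (fun y : ℝ => (1 - ρ^2) / (2*ρ) * ((2 - y)^2)⁻¹ * (y⁻¹ * Real.exp (-x / y)))
      (Set.Icc (1-ρ) (1+ρ)) := by
  intro y hy
  obtain ⟨hy1, hy2⟩ := hy
  have hy0 : 0 < y := by linarith
  have hy2' : y < 2 := by linarith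
  have h2 : (2 - y) ≠ 0 := by intro h; nlinarith
  have c1 : ContinuousAt (fun y : ℝ => ((2 - y)^2)⁻¹) y := by
    apply ContinuousAt.inv₀
    · exact (continuousAt_const.sub continuousAt_id).pow 2
    · positivity
  have c2 : ContinuousAt (fun y : ℝ => y⁻¹) y := continuousAt_id.inv₀ hy0.ne'
  have c3 : ContinuousAt (fun y : ℝ => Real.exp (-x / y)) y :=
    Real.continuous_exp.continuousAt.comp (continuousAt_const.div continuousAt_id hy0.ne')
  have c4 : ContinuousAt (fun y : ℝ =>
      (1 - ρ^2) / (2*ρ) * ((2 - y)^2)⁻¹ * (y⁻¹ * Real.exp (-x / y))) y :=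
    (continuousAt_const.mul c1).mul (c2.mul c3)
  exact c4.continuousWithinAt

lemma inner_integral {ρ x : ℝ} (hρ0 : 0 < ρ) (hρ1 : ρ < 1) (hx : 0 < x) :
    ∫⁻ y in Set.Ioo (1-ρ) (1+ρ),
        ENNReal.ofReal ((1 - ρ^2) / (2*ρ) * ((2 - y)^2)⁻¹ * (y⁻¹ * Real.exp (-(x / y))))
      = ENNReal.ofReal ((1 - ρ^2) / (2*ρ) * (Ffun (1+ρ) x - Ffun (1-ρ) x)) := by
  have hab : (1-ρ : ℝ) ≤ 1+ρ := by linarith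
  have hc : (0:ℝ) < (1 - ρ^2) / (2*ρ) := by
    apply div_pos (by nlinarith) (by linarith)
  set φ : ℝ → ℝ := fun y => (1 - ρ^2) / (2*ρ) * ((2 - y)^2)⁻¹ * (y⁻¹ * Real.exp (-x / y)) with hφ
  have hnegdiv : ∀ y : ℝ, -(x / y) = -x / y := fun y => (neg_div _ _).symm
  have hInt : IntegrableOn φ (Set.Ioo (1-ρ) (1+ρ)) := by
    exact ((contOn_integrand hρ0 hρ1).integrableOn_Icc).mono_set Set.Ioo_subset_Icc_self
  have hnn : 0 ≤ᵐ[volume.restrict (Set.Ioo (1-ρ) (1+ρ))] φ := by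
    filter_upwards [ae_restrict_mem measurableSet_Ioo] with y hy
    have hy0 : 0 < y := by cases hy; nlinarith
    have : (0:ℝ) < y⁻¹ := by positivity
    have h1 : (0:ℝ) ≤ ((2 - y)^2)⁻¹ := by positivity
    have h2 : (0:ℝ) ≤ y⁻¹ * Real.exp (-x / y) := by positivity
    positivity
  have heq : ∀ y, ENNReal.ofReal ((1 - ρ^2) / (2*ρ) * ((2 - y)^2)⁻¹ * (y⁻¹ * Real.exp (-(x / y))))
      = ENNReal.ofReal (φ y) := by
    intro y; rw [hφ]; simp only [hnegdiv]
  simp only [heq]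
  rw [← ofReal_integral_eq_lintegral_ofReal hInt hnn]
  congr 1
  -- real integral computation
  have h1 : ∫ y in Set.Ioo (1-ρ) (1+ρ), φ y = ∫ y in (1-ρ)..(1+ρ), φ y := by
    rw [intervalIntegral.integral_of_le hab, MeasureTheory.integral_Ioc_eq_integral_Ioo]
  rw [h1]
  have hderiv : ∀ y ∈ Set.uIcc (1-ρ) (1+ρ),
      HasDerivAt (fun η => (1 - ρ^2) / (2*ρ) * Ffun η x) (φ y) y := by
    intro y hy
    rw [Set.uIcc_of_le hab] at hy
    obtain ⟨hy1, hy2⟩ := hy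
    have := (hasDerivAt_Ffun hx (by linarith) (by linarith) (η := y)).const_mul ((1 - ρ^2) / (2*ρ))
    convert this using 1
    · rfl
    · rfl
    rw [hφ]; ring
  have hci : IntervalIntegrable φ volume (1-ρ) (1+ρ) := by
    apply ContinuousOn.intervalIntegrable
    rw [Set.uIcc_of_le hab]
    exact contOn_integrand hρ0 hρ1
  rw [intervalIntegral.integral_eq_sub_of_hasDerivAt hderiv hci]
  ring

lemma exp_cov {s : Set ℝ} (hs : MeasurableSet s) {y : ℝ} (hy : 0 < y) :
    expMeasure ((fun e => y * e) ⁻¹' s)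
      = ∫⁻ x in s ∩ Set.Ioi 0, ENNReal.ofReal (y⁻¹ * Real.exp (-(x / y))) := by
  have hys : MeasurableSet ((fun e => y * e) ⁻¹' s) := (measurable_const_mul y) hs
  rw [show _root_.expMeasure = volume.withDensity (Set.indicator (Set.Ioi 0) fun x => ENNReal.ofReal (Real.exp (-x))) from rfl, withDensity_apply _ hys, ← lintegral_indicator hys]
  have hG : Measurable (fun x => (s ∩ Set.Ioi 0).indicator
      (fun x => ENNReal.ofReal (Real.exp (-(x / y)))) x) := by
    apply Measurable.indicator
    · exact ENNReal.measurable_ofReal.comp (Real.measurable_exp.comp (measurable_id.div_const y).neg)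
    · exact hs.inter measurableSet_Ioi
  have hpt : ∀ e : ℝ, ((fun e => y * e) ⁻¹' s).indicator
        (Set.indicator (Set.Ioi 0) fun x => ENNReal.ofReal (Real.exp (-x))) e
      = (s ∩ Set.Ioi 0).indicator (fun x => ENNReal.ofReal (Real.exp (-(x / y)))) (y * e) := by
    intro e
    have hiff : 0 < y * e ↔ 0 < e := by
      constructor
      · intro h; by_contra hc; push_neg at hc; nlinarith
      · intro h; positivity
    classical
    simp only [Set.indicator_apply, Set.mem_preimage, Set.mem_inter_iff, Set.mem_Ioi,
      mul_div_cancel_left₀ _ hy.ne', hiff]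
    by_cases h1 : y * e ∈ s <;> by_cases h2 : 0 < e <;> simp only [h1, h2, if_true, if_false, and_true, and_false, true_and, false_and, ite_self]
  calc ∫⁻ e, ((fun e => y * e) ⁻¹' s).indicator
        (Set.indicator (Set.Ioi 0) fun x => ENNReal.ofReal (Real.exp (-x))) e
      = ∫⁻ e, (s ∩ Set.Ioi 0).indicator (fun x => ENNReal.ofReal (Real.exp (-(x / y)))) (y * e) := by
        simp only [hpt]
    _ = ∫⁻ x, (s ∩ Set.Ioi 0).indicator (fun x => ENNReal.ofReal (Real.exp (-(x / y)))) x
          ∂(Measure.map (y * ·) volume) := by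
        rw [lintegral_map hG (measurable_const_mul y)]
    _ = ENNReal.ofReal |y⁻¹| * ∫⁻ x, (s ∩ Set.Ioi 0).indicator
          (fun x => ENNReal.ofReal (Real.exp (-(x / y)))) x := by
        rw [Real.map_volume_mul_left hy.ne', lintegral_smul_measure, smul_eq_mul]
    _ = ∫⁻ x in s ∩ Set.Ioi 0, ENNReal.ofReal (y⁻¹ * Real.exp (-(x / y))) := by
        rw [lintegral_indicator (hs.inter measurableSet_Ioi), abs_of_pos (by positivity),
          ← lintegral_const_mul _ (by fun_prop)]
        congr 1
        ext x
        rw [ENNReal.ofReal_mul (by positivity)]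

instance expMeasure_prob : IsProbabilityMeasure expMeasure := by
  constructor
  rw [show _root_.expMeasure = volume.withDensity (Set.indicator (Set.Ioi 0) fun x => ENNReal.ofReal (Real.exp (-x))) from rfl, withDensity_apply _ MeasurableSet.univ, Measure.restrict_univ,
    lintegral_indicator measurableSet_Ioi,
    ← ofReal_integral_eq_lintegral_ofReal]
  · rw [integral_exp_neg_Ioi_zero, ENNReal.ofReal_one]
  · have := exp_neg_integrableOn_Ioi (0:ℝ) one_pos
    simpa [IntegrableOn] using this
  · filter_upwards with x using (Real.exp_pos _).le

lemma expMeasure_ne_zero : _root_.expMeasure ≠ 0 := by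
  intro h
  have := measure_univ (μ := _root_.expMeasure)
  rw [h] at this
  simp at this

lemma fρ_meas (ρ : ℝ) : Measurable (Set.indicator (Set.Ioo (1 - ρ) (1 + ρ)) fun y =>
    ENNReal.ofReal ((1 - ρ ^ 2) / (2 * ρ) * ((2 - y) ^ 2)⁻¹)) := by
  apply Measurable.indicator _ measurableSet_Ioo
  fun_prop

lemma key (ρ : ℝ) (hρ0 : 0 < ρ) (hρ1 : ρ < 1) :
    Measure.map (fun p : ℝ × ℝ => p.1 * p.2)
      ((volume.withDensity (Set.indicator (Set.Ioo (1-ρ) (1+ρ)) fun y =>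
          ENNReal.ofReal ((1-ρ^2)/(2*ρ) * ((2-y)^2)⁻¹))).prod expMeasure)
    = volume.withDensity (Set.indicator (Set.Ioi 0) fun x =>
        ENNReal.ofReal ((1-ρ^2)/(2*ρ) * (Ffun (1+ρ) x - Ffun (1-ρ) x))) := by
  have hm : Measurable (fun p : ℝ × ℝ => p.1 * p.2) := measurable_fst.mul measurable_snd
  ext s hs
  rw [Measure.map_apply hm hs, Measure.prod_apply (hm hs),
    lintegral_withDensity_eq_lintegral_mul _ (fρ_meas ρ)
      (measurable_measure_prodMk_left (hm hs))]
  have hind : ∀ y : ℝ,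
      (Set.indicator (Set.Ioo (1-ρ) (1+ρ)) fun y =>
          ENNReal.ofReal ((1-ρ^2)/(2*ρ) * ((2-y)^2)⁻¹)) y
        * expMeasure (Prod.mk y ⁻¹' ((fun p : ℝ × ℝ => p.1 * p.2) ⁻¹' s))
      = Set.indicator (Set.Ioo (1-ρ) (1+ρ)) (fun y =>
          ENNReal.ofReal ((1-ρ^2)/(2*ρ) * ((2-y)^2)⁻¹)
          * expMeasure ((fun e => y * e) ⁻¹' s)) y := by
    intro y
    classical
    by_cases h : y ∈ Set.Ioo (1-ρ) (1+ρ)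
    · rw [Set.indicator_of_mem h, Set.indicator_of_mem h]; rfl
    · rw [Set.indicator_of_notMem h, Set.indicator_of_notMem h, zero_mul]
  simp only [Pi.mul_apply, hind]
  rw [lintegral_indicator measurableSet_Ioo]
  have hstep : ∫⁻ y in Set.Ioo (1-ρ) (1+ρ),
      ENNReal.ofReal ((1-ρ^2)/(2*ρ) * ((2-y)^2)⁻¹) * expMeasure ((fun e => y * e) ⁻¹' s)
      = ∫⁻ y in Set.Ioo (1-ρ) (1+ρ), ∫⁻ x in s ∩ Set.Ioi 0,
          ENNReal.ofReal ((1-ρ^2)/(2*ρ) * ((2-y)^2)⁻¹ * (y⁻¹ * Real.exp (-(x / y)))) := by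
    apply setLIntegral_congr_fun measurableSet_Ioo
    intro y hy
    dsimp only
    have hy0 : 0 < y := by have := hy.1; nlinarith [hρ1]
    rw [exp_cov hs hy0, ← lintegral_const_mul _ (by fun_prop)]
    apply setLIntegral_congr_fun (hs.inter measurableSet_Ioi)
    intro x hx
    dsimp only
    have h1 : (0:ℝ) < 1 - ρ^2 := by nlinarith
    have h2 : (0:ℝ) ≤ (1-ρ^2)/(2*ρ) * ((2-y)^2)⁻¹ := by positivity
    rw [← ENNReal.ofReal_mul h2]
  rw [hstep, lintegral_lintegral_swap]
  swap
  · apply Measurable.aemeasurable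
    have : Function.uncurry (fun (y x : ℝ) =>
        ENNReal.ofReal ((1-ρ^2)/(2*ρ) * ((2-y)^2)⁻¹ * (y⁻¹ * Real.exp (-(x / y)))))
        = fun p : ℝ × ℝ =>
        ENNReal.ofReal ((1-ρ^2)/(2*ρ) * ((2-p.1)^2)⁻¹ * (p.1⁻¹ * Real.exp (-(p.2 / p.1)))) := rfl
    rw [this]
    apply ENNReal.measurable_ofReal.comp
    apply Measurable.mul
    · fun_prop
    · exact (measurable_fst.inv).mul
        (Real.measurable_exp.comp (measurable_snd.div measurable_fst).neg)
  rw [setLIntegral_congr_fun (hs.inter measurableSet_Ioi)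
    (fun x (hx : x ∈ s ∩ Set.Ioi 0) =>
      inner_integral hρ0 hρ1 hx.2)]
  rw [withDensity_apply _ hs, ← lintegral_indicator hs]
  simp only [Set.indicator_indicator]
  rw [lintegral_indicator (hs.inter measurableSet_Ioi)]

theorem stmt_2 {Ω : Type*} [MeasurableSpace Ω] (P : Measure Ω) [IsProbabilityMeasure P]
    (ρ : ℝ) (hρ : ρ ∈ Set.Ioo (0 : ℝ) 1)
    (r E : Ω → ℝ)
    (hlaw : Measure.map (fun ω => (r ω, E ω)) P
      = (volume.withDensity (Set.indicator (Set.Ioo (1 - ρ) (1 + ρ)) fun y =>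
            ENNReal.ofReal ((1 - ρ ^ 2) / (2 * ρ) * ((2 - y) ^ 2)⁻¹))).prod expMeasure) :
    Measure.map (fun ω => r ω * E ω) P
      = volume.withDensity (Set.indicator (Set.Ioi 0) fun x =>
          ENNReal.ofReal ((1 - ρ ^ 2) / (2 * ρ) * (Ffun (1 + ρ) x - Ffun (1 - ρ) x))) := by
  obtain ⟨hρ0, hρ1⟩ := hρ
  set μr := volume.withDensity (Set.indicator (Set.Ioo (1 - ρ) (1 + ρ)) fun y =>
      ENNReal.ofReal ((1 - ρ ^ 2) / (2 * ρ) * ((2 - y) ^ 2)⁻¹)) with hμr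
  have hμr_ne : μr ≠ 0 := by
    intro h
    have h1 : μr Set.univ = 0 := by rw [h]; rfl
    rw [hμr, withDensity_apply _ MeasurableSet.univ, Measure.restrict_univ] at h1
    have h2 : 0 < ∫⁻ y, (Set.indicator (Set.Ioo (1 - ρ) (1 + ρ)) fun y =>
        ENNReal.ofReal ((1 - ρ ^ 2) / (2 * ρ) * ((2 - y) ^ 2)⁻¹)) y := by
      rw [lintegral_pos_iff_support (fρ_meas ρ)]
      have hsub : Set.Ioo (1-ρ) (1+ρ) ⊆ Function.support (Set.indicator (Set.Ioo (1 - ρ) (1 + ρ))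
          fun y => ENNReal.ofReal ((1 - ρ ^ 2) / (2 * ρ) * ((2 - y) ^ 2)⁻¹)) := by
        intro y hy
        rw [Function.mem_support, Set.indicator_of_mem hy]
        have h2y : (0:ℝ) < 2 - y := by have := hy.2; nlinarith
        simp only [ne_eq, ENNReal.ofReal_eq_zero, not_le]
        have : (0:ℝ) < (1 - ρ^2)/(2*ρ) := div_pos (by nlinarith) (by linarith)
        positivity
      calc (0:ℝ≥0∞) < volume (Set.Ioo (1-ρ) (1+ρ)) := by
            rw [Real.volume_Ioo]
            simp only [ENNReal.ofReal_pos]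
            linarith
        _ ≤ _ := measure_mono hsub
    rw [h1] at h2
    exact lt_irrefl _ h2
  have hprod_ne : μr.prod expMeasure ≠ 0 := by
    intro h
    have := Measure.prod_prod (μ := μr) (ν := expMeasure) Set.univ Set.univ
    rw [Set.univ_prod_univ, h] at this
    simp only [Measure.coe_zero, Pi.zero_apply] at this
    rcases mul_eq_zero.mp this.symm with h1 | h1
    · exact hμr_ne (Measure.measure_univ_eq_zero.mp h1)
    · exact expMeasure_ne_zero (Measure.measure_univ_eq_zero.mp h1)
  have hae : AEMeasurable (fun ω => (r ω, E ω)) P := by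
    by_contra h
    rw [Measure.map_of_not_aemeasurable h] at hlaw
    exact hprod_ne hlaw.symm
  have hmm : Measure.map (fun ω => r ω * E ω) P
      = Measure.map (fun p : ℝ × ℝ => p.1 * p.2) (Measure.map (fun ω => (r ω, E ω)) P) := by
    exact (AEMeasurable.map_map_of_aemeasurable (measurable_fst.mul measurable_snd).aemeasurable hae).symm
  rw [hmm, hlaw, key ρ hρ0 hρ1]


end
end

section
/- Let ρ ∈ (0,1) and let U and V be independent exponential random variables with rate 1. Then the random variable r = ((1+ρ)² U + (1−ρ)² V) / ((1+ρ) U + (1−ρ) V) takes values in (1−ρ, 1+ρ) almost surely and has probability density function f_r(y) = ((1−ρ²)/(2ρ)) (2−y)^{−2} for y ∈ (1−ρ, 1+ρ) and f_r(y) = 0 otherwise. -/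
open MeasureTheory ProbabilityTheory

noncomputable section

lemma expMeasure_eq_exp : _root_.expMeasure = ProbabilityTheory.expMeasure 1 := by
  rw [ProbabilityTheory.expMeasure, gammaMeasure]
  refine withDensity_congr_ae ?_
  have h0 : ∀ᵐ (x : ℝ) ∂volume, x ≠ 0 := by
    rw [ae_iff]; simp [Real.volume_singleton]
  filter_upwards [h0] with x hx
  rcases lt_or_gt_of_ne hx with h | h
  · simp [Set.indicator_of_notMem (by simpa using h.le : x ∉ Set.Ioi (0:ℝ)),
      gammaPDF, gammaPDFReal, if_neg (not_le.mpr h)]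
  · rw [Set.indicator_of_mem (by simpa using h), gammaPDF, gammaPDFReal, if_pos h.le]
    norm_num [Real.Gamma_one, Real.rpow_zero]

instance : IsProbabilityMeasure _root_.expMeasure := by
  rw [expMeasure_eq_exp]; exact isProbabilityMeasure_expMeasure one_pos

lemma expMeasure_Iic (t : ℝ) : _root_.expMeasure (Set.Iic t) = ENNReal.ofReal (1 - Real.exp (-t)) := by
  rw [expMeasure_eq_exp, ProbabilityTheory.expMeasure, gammaMeasure,
    withDensity_apply _ measurableSet_Iic]
  have := lintegral_exponentialPDF_eq_antiDeriv one_pos t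
  simp only [exponentialPDF, exponentialPDFReal, one_mul] at this
  simp only [gammaPDF]
  rw [this]
  split_ifs with h
  · norm_num
  · rw [ENNReal.ofReal_zero]
    symm
    rw [ENNReal.ofReal_eq_zero]
    have : (1:ℝ) ≤ Real.exp (-t) := by
      rw [← Real.exp_zero]; exact Real.exp_le_exp.mpr (by linarith)
    linarith

lemma expMeasure_Ioc (t : ℝ) : _root_.expMeasure (Set.Ioc 0 t) = ENNReal.ofReal (1 - Real.exp (-t)) := by
  rcases le_or_gt t 0 with h | h
  · rw [Set.Ioc_eq_empty (by exact fun h' => absurd h (not_le.mpr h'))]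
    symm
    rw [measure_empty, ENNReal.ofReal_eq_zero]
    have : (1:ℝ) ≤ Real.exp (-t) := by
      rw [← Real.exp_zero]; exact Real.exp_le_exp.mpr (by linarith)
    linarith
  · have hset : Set.Ioc 0 t = Set.Iic t \ Set.Iic 0 := by
      ext x; simp only [Set.mem_Ioc, Set.mem_diff, Set.mem_Iic, not_le]; tauto
    rw [hset, measure_diff (Set.Iic_subset_Iic.mpr h.le) measurableSet_Iic.nullMeasurableSet
      (by rw [expMeasure_Iic]; exact ENNReal.ofReal_ne_top), expMeasure_Iic, expMeasure_Iic]
    simp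

lemma expMeasure_Ioi : _root_.expMeasure (Set.Ioi 0) = 1 := by
  have : Set.Ioi (0:ℝ) = (Set.Iic 0)ᶜ := by simp
  rw [this, measure_compl measurableSet_Iic (measure_ne_top _ _), expMeasure_Iic]
  simp


lemma ratio_mem {ρ u v : ℝ} (hρ0 : 0 < ρ) (hρ1 : ρ < 1) (hu : 0 < u) (hv : 0 < v) :
    ((1 + ρ) ^ 2 * u + (1 - ρ) ^ 2 * v) / ((1 + ρ) * u + (1 - ρ) * v)
      ∈ Set.Ioo (1 - ρ) (1 + ρ) := by
  have hd : 0 < (1 + ρ) * u + (1 - ρ) * v := by nlinarith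
  constructor
  · rw [lt_div_iff₀ hd]; nlinarith [mul_pos hρ0 hu, mul_pos (mul_pos hρ0 hρ0) hu]
  · rw [div_lt_iff₀ hd]; nlinarith [mul_pos hρ0 hv, mul_pos (mul_pos hρ0 hρ0) hv]

-- ∫ x in Ioi 0, exp (-(k*x)) = k⁻¹
lemma integral_exp_neg_mul_Ioi {k : ℝ} (hk : 0 < k) :
    ∫ x in Set.Ioi (0:ℝ), Real.exp (-(k * x)) = k⁻¹ := by
  have := MeasureTheory.integral_comp_mul_left_Ioi (fun x => Real.exp (-x)) 0 hk
  simp only [mul_zero, integral_exp_neg_Ioi_zero, smul_eq_mul, mul_one] at this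
  exact this

lemma integrable_exp_neg_mul {k : ℝ} (hk : 0 < k) :
    IntegrableOn (fun x => Real.exp (-(k * x))) (Set.Ioi (0:ℝ)) := by
  have := exp_neg_integrableOn_Ioi 0 hk
  simpa [neg_mul] using this

lemma prod_le_measure {c : ℝ} (hc : 0 < c) :
    (_root_.expMeasure.prod _root_.expMeasure) {p : ℝ × ℝ | 0 < p.1 ∧ 0 < p.2 ∧ p.1 ≤ c * p.2}
      = ENNReal.ofReal (1 - (1 + c)⁻¹) := by
  have hT : MeasurableSet {p : ℝ × ℝ | 0 < p.1 ∧ 0 < p.2 ∧ p.1 ≤ c * p.2} := by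
    apply MeasurableSet.inter (measurableSet_lt measurable_const measurable_fst)
    apply MeasurableSet.inter (measurableSet_lt measurable_const measurable_snd)
    exact measurableSet_le measurable_fst (measurable_const.mul measurable_snd)
  rw [Measure.prod_apply_symm hT]
  have inner : ∀ v : ℝ, _root_.expMeasure ((fun u => (u, v)) ⁻¹' {p : ℝ × ℝ | 0 < p.1 ∧ 0 < p.2 ∧ p.1 ≤ c * p.2})
      = Set.indicator (Set.Ioi 0) (fun v => ENNReal.ofReal (1 - Real.exp (-(c * v)))) v := by
    intro v
    by_cases hv : 0 < v
    · have hpre : ((fun u => (u, v)) ⁻¹' {p : ℝ × ℝ | 0 < p.1 ∧ 0 < p.2 ∧ p.1 ≤ c * p.2})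
          = Set.Ioc 0 (c * v) := by
        ext u; simp [Set.mem_Ioc, hv, and_comm]
      rw [hpre, expMeasure_Ioc, Set.indicator_of_mem (Set.mem_Ioi.mpr hv)]
    · have hpre : ((fun u => (u, v)) ⁻¹' {p : ℝ × ℝ | 0 < p.1 ∧ 0 < p.2 ∧ p.1 ≤ c * p.2})
          = (∅ : Set ℝ) := by
        ext u; simp only [Set.mem_preimage, Set.mem_setOf_eq, Set.mem_empty_iff_false, iff_false]
        tauto
      rw [hpre, measure_empty, Set.indicator_of_notMem (by simpa using hv)]
  rw [lintegral_congr inner, lintegral_indicator measurableSet_Ioi]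
  rw [show _root_.expMeasure = volume.withDensity (Set.indicator (Set.Ioi 0) fun x => ENNReal.ofReal (Real.exp (-x))) from rfl]
  rw [restrict_withDensity measurableSet_Ioi]
  have hf : Measurable (Set.indicator (Set.Ioi 0) fun x : ℝ => ENNReal.ofReal (Real.exp (-x))) :=
    (ENNReal.measurable_ofReal.comp (measurable_id.neg.exp)).indicator measurableSet_Ioi
  have hg : Measurable (fun v : ℝ => ENNReal.ofReal (1 - Real.exp (-(c * v)))) :=
    ENNReal.measurable_ofReal.comp (measurable_const.sub ((measurable_const.mul measurable_id).neg.exp))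
  rw [lintegral_withDensity_eq_lintegral_mul _ hf hg]
  have heq : ∀ v ∈ Set.Ioi (0:ℝ),
      ((Set.indicator (Set.Ioi 0) fun x : ℝ => ENNReal.ofReal (Real.exp (-x))) *
        fun v : ℝ => ENNReal.ofReal (1 - Real.exp (-(c * v)))) v
      = ENNReal.ofReal (Real.exp (-v) - Real.exp (-((1 + c) * v))) := by
    intro v hv
    rw [Pi.mul_apply, Set.indicator_of_mem hv, ← ENNReal.ofReal_mul (Real.exp_nonneg _)]
    congr 1
    rw [mul_sub, mul_one, ← Real.exp_add]
    ring_nf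
  rw [setLIntegral_congr_fun measurableSet_Ioi heq]
  have h1 : IntegrableOn (fun v : ℝ => Real.exp (-v)) (Set.Ioi 0) := by
    simpa using integrable_exp_neg_mul one_pos
  have h2 : IntegrableOn (fun v : ℝ => Real.exp (-((1 + c) * v))) (Set.Ioi 0) :=
    integrable_exp_neg_mul (by linarith)
  have hnn : 0 ≤ᵐ[volume.restrict (Set.Ioi (0:ℝ))]
      fun v : ℝ => Real.exp (-v) - Real.exp (-((1 + c) * v)) := by
    refine (ae_restrict_iff' measurableSet_Ioi).mpr (ae_of_all _ fun v hv => ?_)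
    have hv' : (0:ℝ) < v := hv
    have : -((1 + c) * v) ≤ -v := by nlinarith
    have := Real.exp_le_exp.mpr this
    simp only [Pi.zero_apply]
    linarith
  have hint : IntegrableOn (fun v : ℝ => Real.exp (-v) - Real.exp (-((1 + c) * v))) (Set.Ioi 0) :=
    h1.sub h2
  rw [← ofReal_integral_eq_lintegral_ofReal hint hnn]
  rw [integral_sub h1 h2, integral_exp_neg_Ioi_zero, integral_exp_neg_mul_Ioi (by linarith : (0:ℝ) < 1 + c)]


lemma lint_Ioc {k B y : ℝ} (hk : 0 ≤ k) (hby : B ≤ y) (hy2 : y < 2) :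
    ∫⁻ x in Set.Ioc B y, ENNReal.ofReal (k * ((2 - x) ^ 2)⁻¹)
      = ENNReal.ofReal (k * (2 - y)⁻¹ - k * (2 - B)⁻¹) := by
  have hB2 : B < 2 := lt_of_le_of_lt hby hy2
  have hcont : ContinuousOn (fun x : ℝ => k * ((2 - x) ^ 2)⁻¹) (Set.Icc B y) := by
    apply continuousOn_const.mul
    apply ContinuousOn.inv₀ (((continuous_const.sub continuous_id).pow 2).continuousOn)
    intro x hx
    have h2x : x < 2 := lt_of_le_of_lt hx.2 hy2
    have : (0:ℝ) < (2 - x) ^ 2 := pow_pos (by linarith) 2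
    exact this.ne'
  have hint : IntegrableOn (fun x : ℝ => k * ((2 - x) ^ 2)⁻¹) (Set.Ioc B y) :=
    (hcont.integrableOn_Icc).mono_set Set.Ioc_subset_Icc_self
  have hnn : 0 ≤ᵐ[volume.restrict (Set.Ioc B y)] fun x : ℝ => k * ((2 - x) ^ 2)⁻¹ := by
    refine ae_of_all _ fun x => ?_
    simp only [Pi.zero_apply]
    positivity
  rw [← ofReal_integral_eq_lintegral_ofReal hint hnn]
  congr 1
  have := intervalIntegral.integral_of_le (μ := volume)
    (f := fun x : ℝ => k * ((2 - x) ^ 2)⁻¹) hby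
  rw [← this]
  rw [intervalIntegral.integral_eq_sub_of_hasDerivAt
    (f := fun x : ℝ => k * (2 - x)⁻¹) ?deriv ?ii]
  case deriv =>
    intro x hx
    rw [Set.uIcc_of_le hby] at hx
    have hx2 : x < 2 := lt_of_le_of_lt hx.2 hy2
    have hne : (2 - x) ≠ 0 := by linarith
    have h1 : HasDerivAt (fun x : ℝ => 2 - x) (-1) x := by
      simpa using (hasDerivAt_id x).const_sub 2
    have h2 := (h1.inv hne).const_mul k
    convert h2 using 1
    · rfl
    · rfl
    · rw [neg_neg, one_div]
  case ii =>
    rw [intervalIntegrable_iff, Set.uIoc_of_le hby]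
    exact hint

lemma key_map {ρ : ℝ} (hρ0 : 0 < ρ) (hρ1 : ρ < 1) :
    Measure.map (fun p : ℝ × ℝ =>
        ((1 + ρ) ^ 2 * p.1 + (1 - ρ) ^ 2 * p.2) / ((1 + ρ) * p.1 + (1 - ρ) * p.2))
        (_root_.expMeasure.prod _root_.expMeasure)
      = volume.withDensity (Set.indicator (Set.Ioo (1 - ρ) (1 + ρ)) fun y =>
          ENNReal.ofReal ((1 - ρ ^ 2) / (2 * ρ) * ((2 - y) ^ 2)⁻¹)) := by
  set PP := _root_.expMeasure.prod _root_.expMeasure with hPP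
  set φ := fun p : ℝ × ℝ =>
    ((1 + ρ) ^ 2 * p.1 + (1 - ρ) ^ 2 * p.2) / ((1 + ρ) * p.1 + (1 - ρ) * p.2) with hφdef
  have hφ : Measurable φ := by
    apply Measurable.div
    · exact (measurable_const.mul measurable_fst).add (measurable_const.mul measurable_snd)
    · exact (measurable_const.mul measurable_fst).add (measurable_const.mul measurable_snd)
  have hQ : MeasurableSet ((Set.Ioi 0 : Set ℝ) ×ˢ (Set.Ioi 0 : Set ℝ)) :=
    measurableSet_Ioi.prod measurableSet_Ioi
  have hQc0 : PP (((Set.Ioi 0 : Set ℝ) ×ˢ (Set.Ioi 0 : Set ℝ))ᶜ) = 0 := by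
    rw [measure_compl hQ (measure_ne_top _ _)]
    rw [hPP, Measure.prod_prod, expMeasure_Ioi, measure_univ]
    simp
  have hQae : ∀ᵐ p ∂PP, p ∈ (Set.Ioi 0 : Set ℝ) ×ˢ (Set.Ioi 0 : Set ℝ) := by
    rw [ae_iff]; exact hQc0
  haveI : IsProbabilityMeasure (Measure.map φ PP) :=
    Measure.isProbabilityMeasure_map hφ.aemeasurable
  refine Measure.ext_of_Iic _ _ fun y => ?_
  rw [Measure.map_apply hφ measurableSet_Iic, withDensity_apply _ measurableSet_Iic,
    lintegral_indicator measurableSet_Ioo, Measure.restrict_restrict measurableSet_Ioo]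
  rcases le_or_gt y (1 - ρ) with hyB | hyB
  · have hLHS : PP (φ ⁻¹' Set.Iic y) = 0 := by
      have hsub : (φ ⁻¹' Set.Iic y) ⊆ ((Set.Ioi (0:ℝ)) ×ˢ (Set.Ioi (0:ℝ)))ᶜ := by
        intro p hp hpQ
        have h1 := (ratio_mem hρ0 hρ1 hpQ.1 hpQ.2).1
        have hp' : φ p ≤ y := hp
        simp only [hφdef] at hp'
        linarith
      exact measure_mono_null hsub hQc0
    rw [hLHS]
    have : Set.Ioo (1 - ρ) (1 + ρ) ∩ Set.Iic y = ∅ := by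
      ext x; simp only [Set.mem_inter_iff, Set.mem_Ioo, Set.mem_Iic,
        Set.mem_empty_iff_false, iff_false, not_and]
      intro h1 _; linarith
    rw [this, Measure.restrict_empty, lintegral_zero_measure]
  rcases lt_or_ge y (1 + ρ) with hyA | hyA
  · -- middle case
    set c := ((1 - ρ) * (y - (1 - ρ))) / ((1 + ρ) * ((1 + ρ) - y)) with hcdef
    have hApos : 0 < (1 + ρ) * ((1 + ρ) - y) := by nlinarith
    have hc : 0 < c := div_pos (by nlinarith) hApos
    have hequiv : ∀ p : ℝ × ℝ, p ∈ (Set.Ioi 0 : Set ℝ) ×ˢ (Set.Ioi 0 : Set ℝ) →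
        (φ p ≤ y ↔ p.1 ≤ c * p.2) := by
      rintro ⟨u, v⟩ ⟨hu, hv⟩
      have hu' : (0:ℝ) < u := hu
      have hv' : (0:ℝ) < v := hv
      have hd : 0 < (1 + ρ) * u + (1 - ρ) * v := by nlinarith
      rw [hφdef]
      simp only
      rw [div_le_iff₀ hd, hcdef, div_mul_eq_mul_div, le_div_iff₀ hApos]
      constructor <;> intro h <;> nlinarith
    have hsetae : (φ ⁻¹' Set.Iic y) =ᵐ[PP] {p : ℝ × ℝ | 0 < p.1 ∧ 0 < p.2 ∧ p.1 ≤ c * p.2} := by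
      rw [Filter.eventuallyEq_set]
      filter_upwards [hQae] with p hp
      simp only [Set.mem_preimage, Set.mem_Iic, Set.mem_setOf_eq]
      constructor
      · intro h; exact ⟨hp.1, hp.2, (hequiv p hp).mp h⟩
      · intro h; exact (hequiv p hp).mpr h.2.2
    rw [measure_congr hsetae, prod_le_measure hc]
    have hIoc : Set.Ioo (1 - ρ) (1 + ρ) ∩ Set.Iic y = Set.Ioc (1 - ρ) y := by
      ext x; simp only [Set.mem_inter_iff, Set.mem_Ioo, Set.mem_Iic, Set.mem_Ioc]
      constructor
      · rintro ⟨⟨h1, h2⟩, h3⟩; exact ⟨h1, h3⟩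
      · rintro ⟨h1, h2⟩; exact ⟨⟨h1, by linarith⟩, h2⟩
    rw [hIoc, lint_Ioc (div_nonneg (by nlinarith) (by linarith)) hyB.le (by linarith)]
    have hρne : ρ ≠ 0 := hρ0.ne'
    have h2y : (2:ℝ) - y ≠ 0 := by linarith
    have h1p : (1:ℝ) + ρ ≠ 0 := by linarith
    have h1py : (1:ℝ) + ρ - y ≠ 0 := by linarith
    have h1c : 1 + c = (2 * ρ * (2 - y)) / ((1 + ρ) * ((1 + ρ) - y)) := by
      rw [hcdef]
      field_simp
      ring
    have h2b : (2:ℝ) - (1 - ρ) ≠ 0 := by linarith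
    have h2ρ : (2:ℝ) * ρ ≠ 0 := by simpa using hρne
    congr 1
    rw [h1c, inv_div]
    field_simp
    ring
  · -- y ≥ 1 + ρ
    have hsetae : (φ ⁻¹' Set.Iic y) =ᵐ[PP] (Set.univ : Set (ℝ × ℝ)) := by
      rw [Filter.eventuallyEq_set]
      filter_upwards [hQae] with p hp
      simp only [Set.mem_preimage, Set.mem_Iic, Set.mem_univ, iff_true]
      have := (ratio_mem hρ0 hρ1 hp.1 hp.2).2
      simp only [hφdef]
      linarith [this]
    rw [measure_congr hsetae, measure_univ]
    have hIoo : Set.Ioo (1 - ρ) (1 + ρ) ∩ Set.Iic y = Set.Ioo (1 - ρ) (1 + ρ) := by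
      rw [Set.inter_eq_left]
      intro x hx; exact le_trans hx.2.le hyA
    rw [hIoo, Measure.restrict_congr_set Ioo_ae_eq_Ioc,
      lint_Ioc (div_nonneg (by nlinarith) (by linarith)) (by linarith) (by linarith)]
    have hρne : ρ ≠ 0 := hρ0.ne'
    have h1p : (1:ℝ) + ρ ≠ 0 := by linarith
    have h1m : (1:ℝ) - ρ ≠ 0 := by linarith
    have h2b : (2:ℝ) - (1 - ρ) ≠ 0 := by linarith
    have h2a : (2:ℝ) - (1 + ρ) ≠ 0 := by linarith
    have h2ρ : (2:ℝ) * ρ ≠ 0 := by simpa using hρne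
    rw [← ENNReal.ofReal_one]
    congr 1
    field_simp
    ring

theorem stmt_3 {Ω : Type*} [MeasurableSpace Ω] (P : Measure Ω) [IsProbabilityMeasure P]
    (ρ : ℝ) (hρ : ρ ∈ Set.Ioo (0 : ℝ) 1)
    (U V : Ω → ℝ)
    (hlaw : Measure.map (fun ω => (U ω, V ω)) P = expMeasure.prod expMeasure) :
    (∀ᵐ ω ∂P,
        ((1 + ρ) ^ 2 * U ω + (1 - ρ) ^ 2 * V ω) / ((1 + ρ) * U ω + (1 - ρ) * V ω)
          ∈ Set.Ioo (1 - ρ) (1 + ρ)) ∧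
    Measure.map
        (fun ω => ((1 + ρ) ^ 2 * U ω + (1 - ρ) ^ 2 * V ω) / ((1 + ρ) * U ω + (1 - ρ) * V ω)) P
      = volume.withDensity (Set.indicator (Set.Ioo (1 - ρ) (1 + ρ)) fun y =>
          ENNReal.ofReal ((1 - ρ ^ 2) / (2 * ρ) * ((2 - y) ^ 2)⁻¹)) := by
  obtain ⟨hρ0, hρ1⟩ := hρ
  have hUV : AEMeasurable (fun ω => (U ω, V ω)) P := by
    apply aemeasurable_of_map_neZero
    rw [hlaw]
    exact ⟨IsProbabilityMeasure.ne_zero _⟩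
  set φ := fun p : ℝ × ℝ =>
    ((1 + ρ) ^ 2 * p.1 + (1 - ρ) ^ 2 * p.2) / ((1 + ρ) * p.1 + (1 - ρ) * p.2) with hφdef
  have hφ : Measurable φ := by
    apply Measurable.div
    · exact (measurable_const.mul measurable_fst).add (measurable_const.mul measurable_snd)
    · exact (measurable_const.mul measurable_fst).add (measurable_const.mul measurable_snd)
  have hQ : MeasurableSet ((Set.Ioi 0 : Set ℝ) ×ˢ (Set.Ioi 0 : Set ℝ)) :=
    measurableSet_Ioi.prod measurableSet_Ioi
  constructor
  · have h1 : ∀ᵐ p ∂(_root_.expMeasure.prod _root_.expMeasure),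
        p ∈ (Set.Ioi 0 : Set ℝ) ×ˢ (Set.Ioi 0 : Set ℝ) := by
      rw [ae_iff]
      rw [show {p : ℝ × ℝ | ¬ p ∈ (Set.Ioi 0 : Set ℝ) ×ˢ (Set.Ioi 0 : Set ℝ)}
        = ((Set.Ioi 0 : Set ℝ) ×ˢ (Set.Ioi 0 : Set ℝ))ᶜ from rfl]
      rw [measure_compl hQ (measure_ne_top _ _), Measure.prod_prod, expMeasure_Ioi, measure_univ]
      simp
    rw [← hlaw] at h1
    have h2 := (ae_map_iff hUV hQ).mp h1
    filter_upwards [h2] with ω hω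
    exact ratio_mem hρ0 hρ1 hω.1 hω.2
  · have hcomp : (fun ω => ((1 + ρ) ^ 2 * U ω + (1 - ρ) ^ 2 * V ω) /
        ((1 + ρ) * U ω + (1 - ρ) * V ω)) = φ ∘ (fun ω => (U ω, V ω)) := rfl
    rw [hcomp, ← AEMeasurable.map_map_of_aemeasurable hφ.aemeasurable hUV, hlaw, key_map hρ0 hρ1]

end
end

section
/- Let α > 2 and η ∈ (0,2). Then ∫_0^∞ x^{2/α} F(η, x) dx = G(η, α), where F(η,x) = η/(4(2−η)) · e^{−x/η} − ((2−x)/8) · e^{−x/2} · Ei(x(1/2 − 1/η)), and G(η,α) = (η^{2/α+1}/4) { Γ(2/α + 1) [ η/(2−η) + (α/(α+2)) · ₂F₁(1, 2/α+1; 2/α+2; η/2) ] − (αη/(4(α+1))) · Γ(2/α + 2) · ₂F₁(1, 2/α+2; 2/α+3; η/2) }. -/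
open MeasureTheory Real Set
open scoped ENNReal NNReal

noncomputable section

/-- The Gauss hypergeometric function `₂F₁(1, b; b + 1; z)`, given by its Euler
integral representation `b ∫_0^1 t^(b-1) / (1 - z t) dt` (valid for `b > 0`, `z ∈ [0,1)`). -/
def hyp2F1 (b z : ℝ) : ℝ := b * ∫ t in (0 : ℝ)..1, t ^ (b - 1) / (1 - z * t)

/-- The function `G(η, α)` from Corollary 1 of the paper. -/
def Gfun (η α : ℝ) : ℝ :=
  η ^ (2 / α + 1) / 4 *
    (Real.Gamma (2 / α + 1) *
        (η / (2 - η) + α / (α + 2) * hyp2F1 (2 / α + 1) (η / 2))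
      - α * η / (4 * (α + 1)) * Real.Gamma (2 / α + 2) * hyp2F1 (2 / α + 2) (η / 2))

lemma integrableOn_exp_div (u : ℝ) (hu : 0 < u) :
    IntegrableOn (fun t : ℝ => Real.exp (-t) / t) (Ioi u) := by
  have h1 : IntegrableOn (fun t : ℝ => u⁻¹ * Real.exp (-t)) (Ioi u) := by
    have := (exp_neg_integrableOn_Ioi u zero_lt_one).const_mul u⁻¹
    simp only [neg_mul, one_mul] at this
    exact this
  refine h1.mono' ?_ ?_
  · exact ((Real.measurable_exp.comp measurable_neg).div measurable_id).aestronglyMeasurable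
  · filter_upwards [ae_restrict_mem measurableSet_Ioi] with t ht
    have ht0 : 0 < t := hu.trans ht
    rw [Real.norm_eq_abs, abs_of_nonneg (by positivity), div_eq_inv_mul]
    gcongr
    exact ht.le

lemma Ei_neg_eq (u : ℝ) (hu : 0 < u) :
    Ei (-u) = -∫ r in Ioi (1 : ℝ), Real.exp (-(u * r)) / r := by
  have key := MeasureTheory.integral_comp_mul_left_Ioi
    (fun t => Real.exp (-t) / t) 1 hu
  rw [Ei, neg_neg]
  rw [mul_one] at key
  have h2 : ∫ r in Ioi (1 : ℝ), Real.exp (-(u * r)) / r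
      = u * ∫ r in Ioi (1 : ℝ), Real.exp (-(u * r)) / (u * r) := by
    rw [← integral_const_mul]
    refine setIntegral_congr_fun measurableSet_Ioi (fun r hr => ?_)
    have hr0 : 0 < r := zero_lt_one.trans hr
    field_simp
  rw [h2, key, smul_eq_mul, ← mul_assoc, mul_inv_cancel₀ hu.ne', one_mul]

lemma gamma_int {a c : ℝ} (ha : 0 < a) (hc : 0 < c) :
    ∫ x in Ioi (0 : ℝ), x ^ (a - 1) * Real.exp (-(c * x)) = c ^ (-a) * Real.Gamma a := by
  rw [Real.integral_rpow_mul_exp_neg_mul_Ioi ha hc, one_div, ← Real.rpow_neg_one,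
    ← Real.rpow_mul hc.le]
  norm_num

lemma gamma_integrable {a c : ℝ} (ha : 0 < a) (hc : 0 < c) :
    IntegrableOn (fun x : ℝ => x ^ (a - 1) * Real.exp (-(c * x))) (Ioi 0) := by
  have := integrableOn_rpow_mul_exp_neg_mul_rpow (p := 1) (s := a - 1) (b := c)
    (by linarith) zero_lt_one hc
  refine this.congr_fun (fun x hx => ?_) measurableSet_Ioi
  simp only [Real.rpow_one, neg_mul]

lemma rint_integrable {a μ β : ℝ} (ha : 0 < a) (hμ : 0 < μ) (hβ : 0 < β) :
    IntegrableOn (fun r : ℝ => (μ + β * r) ^ (-a) / r) (Ioi 1) := by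
  have h1 : IntegrableOn (fun r : ℝ => β ^ (-a) * r ^ (-a - 1)) (Ioi 1) :=
    (integrableOn_Ioi_rpow_of_lt (by linarith) zero_lt_one).const_mul _
  refine h1.mono' ?_ ?_
  · apply Measurable.aestronglyMeasurable
    exact ((measurable_const.add (measurable_const_mul β)).pow_const (-a)).div measurable_id
  · filter_upwards [ae_restrict_mem measurableSet_Ioi] with r hr
    have hr0 : 0 < r := zero_lt_one.trans hr
    have hpos : 0 < μ + β * r := by positivity
    rw [Real.norm_eq_abs, abs_of_nonneg (by positivity)]
    have h2 : (μ + β * r) ^ (-a) ≤ (β * r) ^ (-a) :=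
      Real.rpow_le_rpow_of_nonpos (by positivity) (by linarith) (by linarith)
    calc (μ + β * r) ^ (-a) / r ≤ (β * r) ^ (-a) / r := by gcongr
      _ = β ^ (-a) * r ^ (-a - 1) := by
          rw [Real.mul_rpow hβ.le hr0.le, div_eq_mul_inv, mul_assoc,
            ← Real.rpow_neg_one r, ← Real.rpow_add hr0]
          ring_nf

lemma master {a μ β : ℝ} (ha : 0 < a) (hμ : 0 < μ) (hβ : 0 < β) :
    IntegrableOn (fun x : ℝ => x ^ (a - 1) * Real.exp (-(μ * x)) * Ei (-(β * x))) (Ioi 0) ∧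
    ∫ x in Ioi (0 : ℝ), x ^ (a - 1) * Real.exp (-(μ * x)) * Ei (-(β * x))
      = -(Real.Gamma a * ∫ r in Ioi (1 : ℝ), (μ + β * r) ^ (-a) / r) := by
  set F : ℝ × ℝ → ℝ := fun p => p.1 ^ (a - 1) * Real.exp (-((μ + β * p.2) * p.1)) / p.2 with hF
  have hFmeas : Measurable F := by
    apply Measurable.div _ measurable_snd
    apply Measurable.mul (measurable_fst.pow_const _)
    exact Real.measurable_exp.comp
      (((measurable_const.add (measurable_snd.const_mul β)).mul measurable_fst).neg)
  -- inner x-integral for fixed r > 1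
  have hxint : ∀ r : ℝ, r ∈ Ioi (1 : ℝ) →
      ∫ x in Ioi (0 : ℝ), F (x, r) = Real.Gamma a * ((μ + β * r) ^ (-a) / r) := by
    intro r hr
    have hr0 : (0 : ℝ) < r := zero_lt_one.trans hr
    have hc : 0 < μ + β * r := by positivity
    have : ∫ x in Ioi (0 : ℝ), F (x, r)
        = (∫ x in Ioi (0 : ℝ), x ^ (a - 1) * Real.exp (-((μ + β * r) * x))) / r := by
      rw [← integral_div]
    rw [this, gamma_int ha hc]
    ring
  have hxint_integrable : ∀ r : ℝ, r ∈ Ioi (1 : ℝ) →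
      IntegrableOn (fun x => F (x, r)) (Ioi 0) := by
    intro r hr
    have hr0 : (0 : ℝ) < r := zero_lt_one.trans hr
    have hc : 0 < μ + β * r := by positivity
    exact (gamma_integrable ha hc).div_const r
  have hrint : IntegrableOn (fun r : ℝ => Real.Gamma a * ((μ + β * r) ^ (-a) / r)) (Ioi 1) :=
    (rint_integrable ha hμ hβ).const_mul _
  -- nonnegativity
  have hF0 : ∀ x ∈ Ioi (0:ℝ), ∀ r ∈ Ioi (1:ℝ), 0 ≤ F (x, r) := by
    intro x hx r hr
    have hx0 : (0:ℝ) < x := hx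
    have hr0 : (0:ℝ) < r := zero_lt_one.trans hr
    have := Real.rpow_nonneg hx0.le (a - 1)
    positivity
  -- integrability on the product
  have hprod : Integrable F ((volume.restrict (Ioi 0)).prod (volume.restrict (Ioi 1))) := by
    refine ⟨hFmeas.aestronglyMeasurable, ?_⟩
    rw [hasFiniteIntegral_def]
    have hae : ∀ᵐ p ∂((volume.restrict (Ioi (0:ℝ))).prod (volume.restrict (Ioi (1:ℝ)))),
        ‖F p‖ₑ = ENNReal.ofReal (F p) := by
      rw [Measure.prod_restrict]
      filter_upwards [ae_restrict_mem (measurableSet_Ioi.prod measurableSet_Ioi)] with p hp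
      rw [← Real.enorm_eq_ofReal (hF0 p.1 hp.1 p.2 hp.2)]
    rw [lintegral_congr_ae hae,
      lintegral_prod_symm _ (hFmeas.ennreal_ofReal.aemeasurable)]
    have heq : ∀ r ∈ Ioi (1:ℝ),
        (∫⁻ x in Ioi (0:ℝ), ENNReal.ofReal (F (x, r)))
          = ENNReal.ofReal (Real.Gamma a * ((μ + β * r) ^ (-a) / r)) := by
      intro r hr
      rw [← ofReal_integral_eq_lintegral_ofReal (hxint_integrable r hr)
        (Filter.eventually_of_mem (ae_restrict_mem measurableSet_Ioi)
          (fun x hx => hF0 x hx r hr)), hxint r hr]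
    rw [setLIntegral_congr_fun measurableSet_Ioi
      heq]
    rw [← ofReal_integral_eq_lintegral_ofReal hrint ?_]
    · exact ENNReal.ofReal_lt_top
    · filter_upwards [ae_restrict_mem measurableSet_Ioi] with r hr
      have hr0 : (0:ℝ) < r := zero_lt_one.trans hr
      have hg := Real.Gamma_nonneg_of_nonneg ha.le
      have : (0:ℝ) ≤ (μ + β * r) ^ (-a) := Real.rpow_nonneg (by positivity) _
      positivity
  -- swap
  have hswap := MeasureTheory.integral_integral_swap
    (f := fun x r => F (x, r)) (μ := volume.restrict (Ioi 0))
    (ν := volume.restrict (Ioi 1)) hprod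
  -- identify LHS sections
  have hsec : ∀ x ∈ Ioi (0:ℝ),
      (∫ r in Ioi (1:ℝ), F (x, r))
        = -(x ^ (a - 1) * Real.exp (-(μ * x)) * Ei (-(β * x))) := by
    intro x hx
    have hx0 : (0:ℝ) < x := hx
    have h1 : ∀ r : ℝ, F (x, r)
        = (x ^ (a - 1) * Real.exp (-(μ * x))) * (Real.exp (-(β * x * r)) / r) := by
      intro r
      simp only [hF]
      have he : -((μ + β * r) * x) = -(μ * x) + -(β * x * r) := by ring
      rw [mul_div_assoc, he, Real.exp_add]
      ring
    simp_rw [h1]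
    rw [integral_const_mul, Ei_neg_eq (β * x) (by positivity)]
    ring
  have hval : ∫ x in Ioi (0:ℝ), (∫ r in Ioi (1:ℝ), F (x, r))
      = ∫ r in Ioi (1:ℝ), Real.Gamma a * ((μ + β * r) ^ (-a) / r) := by
    rw [hswap]
    exact setIntegral_congr_fun measurableSet_Ioi hxint
  constructor
  · have hint := hprod.integral_prod_left
    refine (hint.neg).congr ?_
    filter_upwards [ae_restrict_mem measurableSet_Ioi] with x hx
    simp only [Pi.neg_apply]
    rw [hsec x hx, neg_neg]
  · have h2 : ∫ x in Ioi (0:ℝ), x ^ (a - 1) * Real.exp (-(μ * x)) * Ei (-(β * x))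
        = -∫ x in Ioi (0:ℝ), (∫ r in Ioi (1:ℝ), F (x, r)) := by
      rw [← integral_neg]
      refine setIntegral_congr_fun measurableSet_Ioi (fun x hx => ?_)
      rw [hsec x hx, neg_neg]
    rw [h2, hval, integral_const_mul]


lemma sub_eq {a μ β : ℝ} (ha : 0 < a) (hμ : 0 < μ) (hβ : 0 < β) :
    ∫ r in Ioi (1 : ℝ), (μ + β * r) ^ (-a) / r
      = (μ + β) ^ (-a) / a * hyp2F1 a (μ / (μ + β)) := by
  have hs : 0 < μ + β := by positivity
  set z : ℝ := μ / (μ + β) with hz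
  set f : ℝ → ℝ := fun t => (μ + β - μ * t) / (β * t) with hf
  set f' : ℝ → ℝ := fun t => -(μ + β) / (β * t ^ 2) with hf'
  have himg : f '' Ioo 0 1 = Ioi 1 := by
    ext y
    constructor
    · rintro ⟨t, ⟨ht0, ht1⟩, rfl⟩
      have h1 : 0 < β * t := by positivity
      have : f t - 1 = (μ + β) * (1 - t) / (β * t) := by
        simp only [hf]
        field_simp
        ring
      have hpos : 0 < f t - 1 := by
        rw [this]
        have : 0 < 1 - t := by linarith
        positivity
      simpa using by linarith [hpos]
    · intro hy
      have hy1 : (1 : ℝ) < y := hy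
      refine ⟨(μ + β) / (β * y + μ), ⟨by positivity, ?_⟩, ?_⟩
      · rw [div_lt_one (by positivity)]
        nlinarith
      · have hne : β * y + μ ≠ 0 := by positivity
        simp only [hf]
        rw [div_eq_iff (by positivity), eq_comm]
        field_simp
        ring
  have hderiv : ∀ t ∈ Ioo (0:ℝ) 1, HasDerivWithinAt f (f' t) (Ioo 0 1) t := by
    intro t ht
    have ht0 : (0:ℝ) < t := ht.1
    have hne : β * t ≠ 0 := by positivity
    have h1 : HasDerivAt (fun t : ℝ => μ + β - μ * t) (-μ) t := by
      simpa using ((hasDerivAt_id t).const_mul μ).const_sub (μ + β)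
    have h2 : HasDerivAt (fun t : ℝ => β * t) β t := by
      simpa using (hasDerivAt_id t).const_mul β
    have := h1.div h2 hne
    rw [show f' t = (-μ * (β * t) - (μ + β - μ * t) * β) / (β * t) ^ 2 by
      simp only [hf']
      rw [div_eq_div_iff (by positivity) (by positivity)]
      ring]
    exact this.hasDerivWithinAt
  have hinj : InjOn f (Ioo 0 1) := by
    intro t1 h1 t2 h2 he
    have h10 : (0:ℝ) < t1 := h1.1
    have h20 : (0:ℝ) < t2 := h2.1
    simp only [hf] at he
    rw [div_eq_div_iff (by positivity) (by positivity)] at he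
    have h4 : (μ + β) * β * (t2 - t1) = 0 := by linear_combination he
    rcases mul_eq_zero.1 h4 with h | h
    · exact absurd h (by positivity)
    · linarith
  have key := MeasureTheory.integral_image_eq_integral_abs_deriv_smul
    measurableSet_Ioo hderiv hinj (fun y => (μ + β * y) ^ (-a) / y)
  rw [himg] at key
  rw [key]
  have hpt : ∀ t ∈ Ioo (0:ℝ) 1,
      |f' t| • ((μ + β * f t) ^ (-a) / f t)
        = (μ + β) ^ (-a) * (t ^ (a - 1) / (1 - z * t)) := by
    intro t ht
    have ht0 : (0:ℝ) < t := ht.1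
    have ht1 : t < 1 := ht.2
    have habs : |f' t| = (μ + β) / (β * t ^ 2) := by
      simp only [hf', neg_div, abs_neg]
      rw [abs_of_nonneg (by positivity)]
    have harg : μ + β * f t = (μ + β) / t := by
      simp only [hf]
      field_simp
      ring
    have hzt : 1 - z * t = (μ + β - μ * t) / (μ + β) := by
      simp only [hz]
      field_simp
    have hnum : 0 < μ + β - μ * t := by nlinarith
    have hft : f t = (μ + β - μ * t) / (β * t) := rfl
    rw [smul_eq_mul, habs, harg, hft, hzt]
    rw [Real.div_rpow hs.le ht0.le, Real.rpow_neg hs.le, Real.rpow_neg ht0.le,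
      Real.rpow_sub ht0, Real.rpow_one]
    field_simp
  rw [setIntegral_congr_fun measurableSet_Ioo hpt, integral_const_mul, hyp2F1]
  rw [intervalIntegral.integral_of_le zero_le_one, integral_Ioc_eq_integral_Ioo]
  field_simp

theorem stmt_11 (α η : ℝ) (hα : 2 < α) (hη : η ∈ Set.Ioo (0 : ℝ) 2) :
    ∫ x in Set.Ioi (0 : ℝ), x ^ (2 / α) * Ffun η x = Gfun η α := by
  obtain ⟨hη0, hη2⟩ := hη
  have hα0 : (0:ℝ) < α := by linarith
  have hp0 : 0 < 2 / α := by positivity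
  set p : ℝ := 2 / α with hpdef
  set β : ℝ := 1 / η - 1 / 2 with hβdef
  have hβ : 0 < β := by
    rw [hβdef, sub_pos, div_lt_div_iff₀ (by norm_num) hη0]
    linarith
  have h1η : 1 / 2 + β = 1 / η := by rw [hβdef]; ring
  have hzval : (1:ℝ) / 2 / (1 / η) = η / 2 := by field_simp
  have hpow : ∀ a : ℝ, ((1:ℝ) / η) ^ (-a) = η ^ a := by
    intro a
    rw [one_div, ← Real.rpow_neg_one η, ← Real.rpow_mul hη0.le, neg_one_mul, neg_neg]
  have hηinv : (0:ℝ) < 1 / η := by positivity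
  have hp1 : (0:ℝ) < p + 1 := by positivity
  have hp2 : (0:ℝ) < p + 2 := by positivity
  -- value of the three pieces
  have hg1 : ∫ x in Ioi (0:ℝ), x ^ p * Real.exp (-((1/η) * x)) = η ^ (p+1) * Real.Gamma (p+1) := by
    have := gamma_int (a := p + 1) hp1 hηinv
    rw [show p + 1 - 1 = p by ring] at this
    rw [this, hpow]
  have hg2 : ∫ x in Ioi (0:ℝ), x ^ p * Real.exp (-((1/2) * x)) * Ei (-(β * x))
      = -(Real.Gamma (p+1) * (η ^ (p+1) / (p+1) * hyp2F1 (p+1) (η/2))) := by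
    have hm := (master (a := p + 1) (μ := 1/2) (β := β) hp1 (by norm_num) hβ).2
    rw [show p + 1 - 1 = p by ring] at hm
    rw [hm, sub_eq hp1 (by norm_num) hβ, h1η, hzval, hpow]
  have hg3 : ∫ x in Ioi (0:ℝ), x ^ (p+1) * Real.exp (-((1/2) * x)) * Ei (-(β * x))
      = -(Real.Gamma (p+2) * (η ^ (p+2) / (p+2) * hyp2F1 (p+2) (η/2))) := by
    have hm := (master (a := p + 2) (μ := 1/2) (β := β) hp2 (by norm_num) hβ).2
    rw [show p + 2 - 1 = p + 1 by ring] at hm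
    rw [hm, sub_eq hp2 (by norm_num) hβ, h1η, hzval, hpow]
  -- integrability of the three pieces
  have hi1 : IntegrableOn (fun x : ℝ => x ^ p * Real.exp (-((1/η) * x))) (Ioi 0) := by
    have := gamma_integrable (a := p + 1) hp1 hηinv
    refine this.congr_fun (fun x _ => ?_) measurableSet_Ioi
    rw [show p + 1 - 1 = p by ring]
  have hi2 : IntegrableOn (fun x : ℝ => x ^ p * Real.exp (-((1/2) * x)) * Ei (-(β * x))) (Ioi 0) := by
    have := (master (a := p + 1) (μ := 1/2) (β := β) hp1 (by norm_num) hβ).1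
    refine this.congr_fun (fun x _ => ?_) measurableSet_Ioi
    rw [show p + 1 - 1 = p by ring]
  have hi3 : IntegrableOn (fun x : ℝ => x ^ (p+1) * Real.exp (-((1/2) * x)) * Ei (-(β * x))) (Ioi 0) := by
    have := (master (a := p + 2) (μ := 1/2) (β := β) hp2 (by norm_num) hβ).1
    refine this.congr_fun (fun x _ => ?_) measurableSet_Ioi
    rw [show p + 2 - 1 = p + 1 by ring]
  -- pointwise decomposition
  have hpt : ∀ x ∈ Ioi (0:ℝ), x ^ p * Ffun η x
      = η / (4 * (2 - η)) * (x ^ p * Real.exp (-((1/η) * x)))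
        - (1/4) * (x ^ p * Real.exp (-((1/2) * x)) * Ei (-(β * x)))
        + (1/8) * (x ^ (p+1) * Real.exp (-((1/2) * x)) * Ei (-(β * x))) := by
    intro x hx
    have hx0 : (0:ℝ) < x := hx
    have he1 : -x / η = -((1/η) * x) := by ring
    have he2 : -x / 2 = -((1/2) * x) := by ring
    have he3 : x * (1/2 - 1/η) = -(β * x) := by rw [hβdef]; ring
    have he4 : x ^ (p+1) = x ^ p * x := Real.rpow_add_one hx0.ne' p
    rw [Ffun, he1, he2, he3, he4]
    ring
  rw [setIntegral_congr_fun measurableSet_Ioi hpt]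
  have hA : Integrable (fun x : ℝ =>
      η / (4 * (2 - η)) * (x ^ p * Real.exp (-((1/η) * x)))
        - (1/4) * (x ^ p * Real.exp (-((1/2) * x)) * Ei (-(β * x))))
      (volume.restrict (Ioi 0)) := (hi1.const_mul _).sub (hi2.const_mul _)
  have hC : Integrable (fun x : ℝ =>
      (1/8) * (x ^ (p+1) * Real.exp (-((1/2) * x)) * Ei (-(β * x))))
      (volume.restrict (Ioi 0)) := hi3.const_mul _
  rw [integral_add hA hC, integral_sub (hi1.const_mul _) (hi2.const_mul _),
    integral_const_mul, integral_const_mul, integral_const_mul, hg1, hg2, hg3]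
  -- final algebra
  rw [Gfun]
  have hY : η ^ (p+2) = η ^ (p+1) * η := by
    rw [show p + 2 = (p+1) + 1 by ring, Real.rpow_add_one hη0.ne']
  rw [hY]
  have h2η : (2:ℝ) - η ≠ 0 := by linarith
  have hp1' : p + 1 = (α + 2) / α := by rw [hpdef]; field_simp; ring
  have hp2' : p + 2 = (2 * α + 2) / α := by rw [hpdef]; field_simp; ring
  have hG1 : (2:ℝ)/α + 1 = p + 1 := by rw [hpdef]
  have hG2 : (2:ℝ)/α + 2 = p + 2 := by rw [hpdef]
  rw [hG1, hG2, hp1', hp2']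
  have hα2 : (α:ℝ) + 2 ≠ 0 := by linarith
  have hα1 : (α:ℝ) + 1 ≠ 0 := by linarith
  have h2α2 : (2:ℝ) * α + 2 ≠ 0 := by linarith
  field_simp
  ring

end
end
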